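/- Let R be a finite set, B a real R×R matrix, and l ∈ (0,∞)^R. For any r ∈ (0,∞)^R, ∫_{[0,2π]^R} exp(Σ_{x,y∈R} B_{x,y} √(l_x l_y) e^{i(θ_x−θ_y)}) ∏_x dθ_x/(2π) = ∫_{[0,2π]^R} exp(Σ_{x,y∈R} r_x B_{x,y} r_y^{−1} √(l_x l_y) e^{i(θ_x−θ_y)}) ∏_x dθ_x/(2π). -/

import Mathlib

open MeasureTheory Complex Finset Set Metric

namespace Stmt14A

variable {ι : Type*} [Fintype ι]

/-! ### Translation invariance of torus integrals -/

lemma restrict_box :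
    (volume : Measure (ι → ℝ)).restrict (Set.univ.pi fun _ => Set.Ioc 0 (2 * Real.pi))
      = Measure.pi (fun _ : ι => volume.restrict (Set.Ioc 0 (2 * Real.pi))) := by
  refine (Measure.pi_eq (μ := fun _ : ι => volume.restrict (Set.Ioc 0 (2 * Real.pi)))
    fun s hs => ?_).symm
  rw [Measure.restrict_apply (MeasurableSet.univ_pi hs), ← Set.pi_inter_distrib,
    volume_pi, Measure.pi_pi]
  simp_rw [Measure.restrict_apply (hs _)]

lemma box_ae :
    (Set.univ.pi fun _ : ι => Set.Ioc 0 (2 * Real.pi))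
      =ᵐ[(volume : Measure (ι → ℝ))] (Set.univ.pi fun _ : ι => Set.Icc 0 (2 * Real.pi)) := by
  rw [volume_pi]
  exact Measure.pi_Ioc_ae_eq_pi_Icc

lemma translate_integral (f : (ι → ℝ) → ℂ) (F : (ι → AddCircle (2 * Real.pi)) → ℂ)
    (hF : Continuous F) (hf : ∀ θ : ι → ℝ, f θ = F fun x => (θ x : AddCircle (2 * Real.pi)))
    (v : ι → ℝ) :
    (∫ θ in Set.univ.pi fun _ : ι => Set.Icc 0 (2 * Real.pi), f (θ + v))
      = ∫ θ in Set.univ.pi fun _ : ι => Set.Icc 0 (2 * Real.pi), f θ := by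
  haveI : Fact (0 < 2 * Real.pi) := ⟨by positivity⟩
  rw [← setIntegral_congr_set (box_ae (ι := ι)), ← setIntegral_congr_set (box_ae (ι := ι))]
  have hmp : MeasurePreserving (fun (θ : ι → ℝ) (x : ι) => (θ x : AddCircle (2 * Real.pi)))
      (volume.restrict (Set.univ.pi fun _ => Set.Ioc 0 (2 * Real.pi)))
      (Measure.pi fun _ : ι => volume) := by
    rw [restrict_box]
    refine measurePreserving_pi _ _ fun i => ?_
    simpa using AddCircle.measurePreserving_mk (2 * Real.pi) 0
  have key : ∀ w : ι → AddCircle (2 * Real.pi),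
      (∫ θ in Set.univ.pi fun _ : ι => Set.Ioc 0 (2 * Real.pi),
          F ((fun x => (θ x : AddCircle (2 * Real.pi))) + w))
        = ∫ u, F (u + w) ∂(Measure.pi fun _ : ι => volume) := by
    intro w
    rw [← hmp.map_eq, integral_map hmp.aemeasurable]
    exact (hF.comp (continuous_id.add continuous_const)).aestronglyMeasurable
  have e1 : (∫ θ in Set.univ.pi fun _ : ι => Set.Ioc 0 (2 * Real.pi), f (θ + v))
      = ∫ θ in Set.univ.pi fun _ : ι => Set.Ioc 0 (2 * Real.pi),
          F ((fun x => (θ x : AddCircle (2 * Real.pi)))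
            + fun x => (v x : AddCircle (2 * Real.pi))) := by
    refine integral_congr_ae (Filter.Eventually.of_forall fun θ => ?_)
    show f (θ + v) = _
    rw [hf]
    congr 1
  have h0 := key 0
  simp only [add_zero] at h0
  rw [e1, key, integral_add_right_eq_self, ← h0]
  refine integral_congr_ae (Filter.Eventually.of_forall fun θ => ?_)
  exact (hf θ).symm

/-! ### The analytic family of torus integrals -/

noncomputable def GG (c d : ι → ι → ℂ) (z : ℂ) (θ : ι → ℝ) : ℂ :=
  Complex.exp (∑ x, ∑ y, c x y * Complex.exp (z * d x y) *
    Complex.exp (Complex.I * ((θ x : ℂ) - (θ y : ℂ))))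

noncomputable def GG' (c d : ι → ι → ℂ) (z : ℂ) (θ : ι → ℝ) : ℂ :=
  GG c d z θ * ∑ x, ∑ y, c x y * (Complex.exp (z * d x y) * d x y) *
    Complex.exp (Complex.I * ((θ x : ℂ) - (θ y : ℂ)))

lemma cont_GG (c d : ι → ι → ℂ) : Continuous fun p : ℂ × (ι → ℝ) => GG c d p.1 p.2 := by
  unfold GG; fun_prop

lemma cont_GG' (c d : ι → ι → ℂ) : Continuous fun p : ℂ × (ι → ℝ) => GG' c d p.1 p.2 := by
  unfold GG' GG; fun_prop

lemma hasDerivAt_GG (c d : ι → ι → ℂ) (z : ℂ) (θ : ι → ℝ) :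
    HasDerivAt (fun w => GG c d w θ) (GG' c d z θ) z := by
  have h : HasDerivAt (fun w : ℂ => ∑ x, ∑ y, c x y * Complex.exp (w * d x y) *
      Complex.exp (Complex.I * ((θ x : ℂ) - (θ y : ℂ))))
      (∑ x, ∑ y, c x y * (Complex.exp (z * d x y) * d x y) *
      Complex.exp (Complex.I * ((θ x : ℂ) - (θ y : ℂ)))) z := by
    refine HasDerivAt.fun_sum fun x _ => HasDerivAt.fun_sum fun y _ => ?_
    exact (((hasDerivAt_mul_const (d x y)).cexp).const_mul (c x y)).mul_const _
  simpa [GG, GG'] using h.cexp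

lemma differentiable_torus (c d : ι → ι → ℂ) :
    Differentiable ℂ fun z =>
      ∫ θ in Set.univ.pi fun _ : ι => Set.Icc 0 (2 * Real.pi), GG c d z θ := by
  intro z0
  set box : Set (ι → ℝ) := Set.univ.pi fun _ : ι => Set.Icc 0 (2 * Real.pi) with hbox
  have hbox_meas : MeasurableSet box := MeasurableSet.univ_pi fun _ => measurableSet_Icc
  have hbox_cpt : IsCompact box := isCompact_univ_pi fun _ => isCompact_Icc
  haveI : IsFiniteMeasure (volume.restrict box) :=
    ⟨by rw [Measure.restrict_apply_univ]; exact hbox_cpt.measure_lt_top⟩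
  obtain ⟨C, hC⟩ := ((isCompact_closedBall z0 1).prod hbox_cpt).exists_bound_of_continuousOn
    (cont_GG' c d).continuousOn
  have H := hasDerivAt_integral_of_dominated_loc_of_deriv_le (μ := volume.restrict box)
    (F := fun z θ => GG c d z θ) (F' := fun z θ => GG' c d z θ) (x₀ := z0)
    (bound := fun _ => C) (ball_mem_nhds z0 one_pos)
    (Filter.Eventually.of_forall fun z =>
      ((cont_GG c d).comp (continuous_const.prodMk continuous_id)).aestronglyMeasurable)
    (((cont_GG c d).comp
      (continuous_const.prodMk continuous_id)).continuousOn.integrableOn_compact hbox_cpt)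
    ((cont_GG' c d).comp (continuous_const.prodMk continuous_id)).aestronglyMeasurable
    ((ae_restrict_iff' hbox_meas).2 (Filter.Eventually.of_forall fun θ hθ z hz =>
      hC (z, θ) ⟨ball_subset_closedBall hz, hθ⟩))
    (integrable_const C)
    (Filter.Eventually.of_forall fun θ z _ => hasDerivAt_GG c d z θ)
  exact H.2.differentiableAt

/-! ### Representation on the torus group and the phase identity -/

noncomputable def FC (c : ι → ι → ℂ) (u : ι → AddCircle (2 * Real.pi)) : ℂ :=
  Complex.exp (∑ x, ∑ y, c x y *
    ((AddCircle.toCircle (u x) * (AddCircle.toCircle (u y))⁻¹ : Circle) : ℂ))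

lemma cont_FC (c : ι → ι → ℂ) : Continuous (FC c) := by
  unfold FC
  refine Complex.continuous_exp.comp (continuous_finset_sum _ fun x _ =>
    continuous_finset_sum _ fun y _ => continuous_const.mul ?_)
  refine continuous_subtype_val.comp ?_
  exact ((AddCircle.continuous_toCircle.comp (continuous_apply x)).mul
    ((AddCircle.continuous_toCircle.comp (continuous_apply y)).inv))

lemma toCircle_coe_eq (θ : ℝ) :
    ((AddCircle.toCircle (θ : AddCircle (2 * Real.pi)) : Circle) : ℂ)
      = Complex.exp (Complex.I * θ) := by
  rw [AddCircle.toCircle_apply_mk, Circle.coe_exp]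
  have : 2 * Real.pi / (2 * Real.pi) * θ = θ := by
    field_simp
  rw [this, mul_comm]

lemma GG_zero_repr (c d : ι → ι → ℂ) (θ : ι → ℝ) :
    GG c d 0 θ = FC c (fun x => ((θ x : ℝ) : AddCircle (2 * Real.pi))) := by
  unfold GG FC
  congr 1
  refine Finset.sum_congr rfl fun x _ => Finset.sum_congr rfl fun y _ => ?_
  push_cast
  rw [toCircle_coe_eq, toCircle_coe_eq, ← Complex.exp_neg, ← Complex.exp_add]
  rw [zero_mul, Complex.exp_zero, mul_one]
  congr 1
  ring

lemma phase_eq (c : ι → ι → ℂ) (s : ι → ℝ) (t : ℝ) (θ : ι → ℝ) :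
    GG c (fun x y => (s x : ℂ) - (s y : ℂ)) (Complex.I * (t : ℂ)) θ
      = GG c (fun x y => (s x : ℂ) - (s y : ℂ)) 0 (θ + t • s) := by
  unfold GG
  congr 1
  refine Finset.sum_congr rfl fun x _ => Finset.sum_congr rfl fun y _ => ?_
  simp only [mul_assoc, ← Complex.exp_add]
  congr 2
  simp only [Pi.add_apply, Pi.smul_apply, smul_eq_mul]
  push_cast
  ring

/-! ### The contour deformation via the identity theorem -/

lemma deform (c : ι → ι → ℂ) (s : ι → ℝ) :
    (∫ θ in Set.univ.pi fun _ : ι => Set.Icc 0 (2 * Real.pi),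
        GG c (fun x y => (s x : ℂ) - (s y : ℂ)) 1 θ)
      = ∫ θ in Set.univ.pi fun _ : ι => Set.Icc 0 (2 * Real.pi),
          GG c (fun x y => (s x : ℂ) - (s y : ℂ)) 0 θ := by
  set d : ι → ι → ℂ := fun x y => (s x : ℂ) - (s y : ℂ) with hd
  set h : ℂ → ℂ := fun z =>
    ∫ θ in Set.univ.pi fun _ : ι => Set.Icc 0 (2 * Real.pi), GG c d z θ with hh
  have hA : AnalyticOnNhd ℂ h Set.univ :=
    (differentiable_torus c d).differentiableOn.analyticOnNhd isOpen_univ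
  have hkey : ∀ t : ℝ, h (Complex.I * (t : ℂ)) = h 0 := by
    intro t
    have e1 : h (Complex.I * (t : ℂ))
        = ∫ θ in Set.univ.pi fun _ : ι => Set.Icc 0 (2 * Real.pi),
            GG c d 0 (θ + t • s) :=
      integral_congr_ae (Filter.Eventually.of_forall fun θ => phase_eq c s t θ)
    rw [e1]
    exact translate_integral (fun θ => GG c d 0 θ) (FC c) (cont_FC c)
      (fun θ => GG_zero_repr c d θ) (t • s)
  have freq : ∃ᶠ z in nhdsWithin (0 : ℂ) {(0 : ℂ)}ᶜ, h z = h 0 := by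
    have h1 : Filter.Tendsto (fun n : ℕ => (1 / ((n : ℝ) + 1) : ℝ)) Filter.atTop (nhds 0) :=
      tendsto_one_div_add_atTop_nhds_zero_nat
    have h2 : Filter.Tendsto (fun n : ℕ => (Complex.I * ((1 / ((n : ℝ) + 1) : ℝ) : ℂ)))
        Filter.atTop (nhds 0) := by
      have := (Complex.continuous_ofReal.tendsto 0).comp h1
      simpa using this.const_mul Complex.I
    have h3 : Filter.Tendsto (fun n : ℕ => (Complex.I * ((1 / ((n : ℝ) + 1) : ℝ) : ℂ)))
        Filter.atTop (nhdsWithin (0 : ℂ) {(0 : ℂ)}ᶜ) := by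
      refine tendsto_nhdsWithin_of_tendsto_nhds_of_eventually_within _ h2
        (Filter.Eventually.of_forall fun n => ?_)
      have hne : ((1 / ((n : ℝ) + 1) : ℝ) : ℂ) ≠ 0 := by
        rw [Complex.ofReal_ne_zero]
        positivity
      simpa using mul_ne_zero Complex.I_ne_zero hne
    exact h3.frequently (Filter.Frequently.of_forall fun n => hkey _)
  have heq := hA.eqOn_of_preconnected_of_frequently_eq analyticOnNhd_const
    isPreconnected_univ (Set.mem_univ (0 : ℂ)) freq
  have h10 : h 1 = h 0 := heq (Set.mem_univ 1)
  exact h10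

end Stmt14A

/-- contour-deformation identity for the torus integral: for any
`r ∈ (0,∞)^R`, the normalized torus integral of
`exp(∑_{x,y} B_{x,y}√(l_x l_y)e^{i(θ_x−θ_y)})` is unchanged when `B_{x,y}` is replaced
by `r_x B_{x,y} r_y⁻¹`. -/
theorem stmt14 {ι : Type*} [Fintype ι] [DecidableEq ι] (B : Matrix ι ι ℝ)
    (l : ι → ℝ) (hl : ∀ x, 0 < l x) (r : ι → ℝ) (hr : ∀ x, 0 < r x) :
    (∫ θ : ι → ℝ in Set.univ.pi fun _ : ι => Set.Icc 0 (2 * Real.pi),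
        Complex.exp (∑ x, ∑ y, ((B x y * Real.sqrt (l x * l y) : ℝ) : ℂ) *
          Complex.exp (Complex.I * ((θ x : ℂ) - (θ y : ℂ)))))
      = ∫ θ : ι → ℝ in Set.univ.pi fun _ : ι => Set.Icc 0 (2 * Real.pi),
          Complex.exp (∑ x, ∑ y,
            ((r x * B x y * (r y)⁻¹ * Real.sqrt (l x * l y) : ℝ) : ℂ) *
              Complex.exp (Complex.I * ((θ x : ℂ) - (θ y : ℂ)))) := by
  set c : ι → ι → ℂ := fun x y => ((B x y * Real.sqrt (l x * l y) : ℝ) : ℂ) with hc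
  set s : ι → ℝ := fun x => Real.log (r x) with hs
  have key := Stmt14A.deform c s
  have hL : (∫ θ : ι → ℝ in Set.univ.pi fun _ : ι => Set.Icc 0 (2 * Real.pi),
      Complex.exp (∑ x, ∑ y, ((B x y * Real.sqrt (l x * l y) : ℝ) : ℂ) *
        Complex.exp (Complex.I * ((θ x : ℂ) - (θ y : ℂ)))))
      = ∫ θ in Set.univ.pi fun _ : ι => Set.Icc 0 (2 * Real.pi),
          Stmt14A.GG c (fun x y => (s x : ℂ) - (s y : ℂ)) 0 θ := by
    refine integral_congr_ae (Filter.Eventually.of_forall fun θ => ?_)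
    simp [Stmt14A.GG, hc]
  have hR : (∫ θ : ι → ℝ in Set.univ.pi fun _ : ι => Set.Icc 0 (2 * Real.pi),
      Complex.exp (∑ x, ∑ y, ((r x * B x y * (r y)⁻¹ * Real.sqrt (l x * l y) : ℝ) : ℂ) *
        Complex.exp (Complex.I * ((θ x : ℂ) - (θ y : ℂ)))))
      = ∫ θ in Set.univ.pi fun _ : ι => Set.Icc 0 (2 * Real.pi),
          Stmt14A.GG c (fun x y => (s x : ℂ) - (s y : ℂ)) 1 θ := by
    refine integral_congr_ae (Filter.Eventually.of_forall fun θ => ?_)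
    show Complex.exp _ = Stmt14A.GG _ _ _ _
    unfold Stmt14A.GG
    congr 1
    refine Finset.sum_congr rfl fun x _ => Finset.sum_congr rfl fun y _ => ?_
    have hxy : ((r x * B x y * (r y)⁻¹ * Real.sqrt (l x * l y) : ℝ) : ℂ)
        = c x y * Complex.exp (1 * ((s x : ℂ) - (s y : ℂ))) := by
      rw [one_mul, ← Complex.ofReal_sub, ← Complex.ofReal_exp, hs]
      simp only [Real.exp_sub, Real.exp_log (hr x), Real.exp_log (hr y)]
      rw [hc]
      push_cast
      ring
    rw [hxy]
  rw [hL, hR, key]
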